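/- The ordered set of functions {sin θ, sin 2θ, …, sin mθ} is an extended complete Chebyshev system on (0, π); that is, for each k ∈ {1,…,m}, every nontrivial real linear combination of sin θ, …, sin kθ has at most k−1 zeros on (0, π) counted with multiplicity. -/

import Mathlib

/-- `f` has at most `k` zeros on `E` counted with multiplicity. -/
def ZerosWithMultLe (f : ℝ → ℝ) (E : Set ℝ) (k : ℕ) : Prop :=
  ∀ (S : Finset ℝ) (m : ℝ → ℕ), ↑S ⊆ E →
    (∀ x ∈ S, 1 ≤ m x) →
    (∀ x ∈ S, ∀ j < m x, iteratedDeriv j f x = 0) →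
    ∑ x ∈ S, m x ≤ k


open Polynomial Polynomial.Chebyshev Real

lemma Uaux : ∀ n : ℕ, (U ℝ (n:ℤ)).natDegree ≤ n ∧ (U ℝ (n:ℤ)).coeff n = 2^n := by
  intro n
  induction n using Nat.twoStepInduction with
  | zero => simp [U_zero]
  | one =>
    constructor
    · show (U ℝ 1).natDegree ≤ 1
      rw [U_one]
      calc ((2 : ℝ[X]) * X).natDegree ≤ (2:ℝ[X]).natDegree + X.natDegree := natDegree_mul_le
        _ ≤ 1 := by simp
    · show (U ℝ 1).coeff 1 = 2 ^ 1
      rw [U_one]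
      have h2 : (2 : ℝ[X]) = C 2 := by rw [map_ofNat]
      rw [h2, coeff_C_mul, coeff_X_one]
      norm_num
  | more n ih2 ih1 =>
    have hcast : ((n + 2 : ℕ) : ℤ) = (n : ℤ) + 2 := by push_cast; ring
    rw [hcast, U_add_two]
    have hc1 : ((n+1 : ℕ) : ℤ) = (n:ℤ) + 1 := by push_cast; ring
    rw [hc1] at ih1
    constructor
    · calc (2 * X * U ℝ ((n:ℤ)+1) - U ℝ n).natDegree
          ≤ max (2 * X * U ℝ ((n:ℤ)+1)).natDegree (U ℝ (n:ℤ)).natDegree := natDegree_sub_le _ _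
        _ ≤ n + 2 := by
            apply max_le
            · calc (2 * X * U ℝ ((n:ℤ)+1)).natDegree
                  ≤ (2 * X : ℝ[X]).natDegree + (U ℝ ((n:ℤ)+1)).natDegree := natDegree_mul_le
                _ ≤ 1 + (n+1) := by
                    gcongr
                    · calc ((2 : ℝ[X]) * X).natDegree ≤ (2:ℝ[X]).natDegree + X.natDegree :=
                        natDegree_mul_le
                        _ ≤ 1 := by simp
                    · exact ih1.1
                _ = n + 2 := by ring
            · omega
    · have h2 : (2 : ℝ[X]) = C 2 := by rw [map_ofNat]
      rw [coeff_sub, coeff_eq_zero_of_natDegree_lt (lt_of_le_of_lt ih2.1 (by omega)),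
        mul_assoc, h2, coeff_C_mul, show n + 2 = (n + 1) + 1 from rfl, coeff_X_mul, ih1.2]
      ring

lemma deriv_sin_form (Q : ℝ[X]) :
    deriv (fun θ => Real.sin θ * Q.eval (Real.cos θ))
      = fun θ => (X * Q - (1 - X^2) * derivative Q).eval (Real.cos θ) := by
  funext θ
  have h1 : HasDerivAt Real.sin (Real.cos θ) θ := Real.hasDerivAt_sin θ
  have h2 : HasDerivAt (fun t => Q.eval (Real.cos t))
      (Q.derivative.eval (Real.cos θ) * (-Real.sin θ)) θ :=
    (Q.hasDerivAt (Real.cos θ)).comp θ (Real.hasDerivAt_cos θ)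
  rw [show deriv (fun θ => Real.sin θ * Q.eval (Real.cos θ)) θ = _ from (h1.mul h2).deriv]
  have hs : Real.sin θ ^ 2 = 1 - Real.cos θ ^ 2 := Real.sin_sq θ
  simp only [eval_sub, eval_mul, eval_X, eval_sub, eval_one, eval_pow]
  linear_combination (-(eval (Real.cos θ) (derivative Q))) * hs

lemma deriv_cos_form (R : ℝ[X]) :
    deriv (fun θ => R.eval (Real.cos θ))
      = fun θ => Real.sin θ * (-derivative R).eval (Real.cos θ) := by
  funext θ
  have h2 : HasDerivAt (fun t => R.eval (Real.cos t))
      (R.derivative.eval (Real.cos θ) * (-Real.sin θ)) θ :=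
    (R.hasDerivAt (Real.cos θ)).comp θ (Real.hasDerivAt_cos θ)
  rw [h2.deriv, eval_neg]
  ring

lemma key (x : ℝ) (hs : Real.sin x ≠ 0) : ∀ n : ℕ,
    (∀ Q : ℝ[X], Q ≠ 0 → Q.rootMultiplicity (Real.cos x) = n →
      iteratedDeriv n (fun θ => Real.sin θ * Q.eval (Real.cos θ)) x ≠ 0) ∧
    (∀ R : ℝ[X], R ≠ 0 → R.rootMultiplicity (Real.cos x) = n →
      iteratedDeriv n (fun θ => R.eval (Real.cos θ)) x ≠ 0) := by
  have hc2 : Real.cos x ^ 2 ≠ 1 := by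
    have := Real.sin_sq_add_cos_sq x
    intro h; rw [h] at this
    exact hs (by nlinarith)
  intro n
  induction n with
  | zero =>
    constructor
    · intro Q hQ h0
      have hroot : ¬ Q.IsRoot (Real.cos x) := by
        intro hr
        have := (Polynomial.rootMultiplicity_pos hQ).mpr hr
        omega
      simp only [iteratedDeriv_zero]
      exact mul_ne_zero hs hroot
    · intro R hR h0
      have hroot : ¬ R.IsRoot (Real.cos x) := by
        intro hr
        have := (Polynomial.rootMultiplicity_pos hR).mpr hr
        omega
      simp only [iteratedDeriv_zero]
      exact hroot
  | succ n ih =>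
    constructor
    · -- sin form
      intro Q hQ hmult
      set c := Real.cos x with hc
      obtain ⟨S, hQeq, hSd⟩ := Q.exists_eq_pow_rootMultiplicity_mul_and_not_dvd hQ c
      rw [hmult] at hQeq
      have hSc : S.eval c ≠ 0 := fun h => hSd (dvd_iff_isRoot.mpr h)
      set T : ℝ[X] := (X - C c) * X * S - (1 - X^2) * (((n:ℝ)+1) • S)
        - (1 - X^2) * (X - C c) * derivative S with hT
      have hRT : X * Q - (1 - X^2) * derivative Q = (X - C c)^n * T := by
        rw [hQeq, hT, derivative_mul, derivative_pow]
        simp only [derivative_X_sub_C, Polynomial.smul_eq_C_mul]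
        push_cast
        ring
      have hTc : T.eval c = -((1 - c^2) * ((n:ℝ)+1) * S.eval c) := by
        simp [hT, Polynomial.smul_eq_C_mul]
        ring
      have hTne : T.eval c ≠ 0 := by
        rw [hTc]
        have h1 : (1 : ℝ) - c^2 ≠ 0 := fun h => hc2 (by linarith)
        have h2 : ((n:ℝ)+1) ≠ 0 := by positivity
        simp only [neg_ne_zero]
        exact mul_ne_zero (mul_ne_zero h1 h2) hSc
      have hT0 : T ≠ 0 := fun h => hTne (by rw [h]; simp)
      have hprodne : (X - C c)^n * T ≠ 0 :=
        mul_ne_zero (pow_ne_zero _ (X_sub_C_ne_zero c)) hT0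
      have hmultR : (X * Q - (1 - X^2) * derivative Q).rootMultiplicity c = n := by
        rw [hRT, Polynomial.rootMultiplicity_mul hprodne,
          Polynomial.rootMultiplicity_X_sub_C_pow,
          Polynomial.rootMultiplicity_eq_zero (fun h => hTne h)]
        omega
      rw [iteratedDeriv_succ', deriv_sin_form]
      exact ih.2 _ (hRT ▸ hprodne) hmultR
    · -- cos form
      intro R hR hmult
      set c := Real.cos x with hc
      have hroot : R.IsRoot c :=
        (Polynomial.rootMultiplicity_pos hR).mp (by omega)
      have hdR : derivative R ≠ 0 := by
        intro h
        have hdeg : R.natDegree = 0 := natDegree_eq_zero_of_derivative_eq_zero h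
        obtain ⟨a, ha⟩ := Polynomial.natDegree_eq_zero.mp hdeg
        rw [← ha] at hroot
        simp [IsRoot] at hroot
        exact hR (by rw [← ha, hroot]; simp)
      have hmultd : (derivative R).rootMultiplicity c = n := by
        rw [Polynomial.derivative_rootMultiplicity_of_root hroot, hmult]
        omega
      have hneg : (-derivative R).rootMultiplicity c = n := by
        have h1 : (-1 : ℝ[X]) * derivative R ≠ 0 := by simpa using hdR
        have : (-derivative R) = (-1 : ℝ[X]) * derivative R := by ring
        rw [this, Polynomial.rootMultiplicity_mul h1, show (-1 : ℝ[X]) = C (-1) by simp,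
          Polynomial.rootMultiplicity_C, hmultd]
        omega
      rw [iteratedDeriv_succ', deriv_cos_form]
      exact ih.1 _ (by simpa using hdR) hneg

lemma mult_le (x : ℝ) (hs : Real.sin x ≠ 0) (P : ℝ[X]) (hP : P ≠ 0) (n : ℕ)
    (h : ∀ j < n, iteratedDeriv j (fun θ => Real.sin θ * P.eval (Real.cos θ)) x = 0) :
    n ≤ P.rootMultiplicity (Real.cos x) := by
  by_contra hlt
  push_neg at hlt
  exact (key x hs _).1 P hP rfl (h _ hlt)

theorem stmt_5 (m : ℕ) :
    ∀ k, 1 ≤ k → k ≤ m → ∀ lam : ℕ → ℝ, (∃ j < k, lam j ≠ 0) →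
      ZerosWithMultLe (fun θ => ∑ j ∈ Finset.range k, lam j * Real.sin ((j + 1) * θ))
        (Set.Ioo 0 Real.pi) (k - 1) := by
  intro k hk1 _ lam hlam
  set P : ℝ[X] := ∑ j ∈ Finset.range k, C (lam j) * U ℝ (j:ℤ) with hPdef
  -- the function equals sin θ * P(cos θ)
  have hfeq : (fun θ => ∑ j ∈ Finset.range k, lam j * Real.sin ((j + 1) * θ))
      = fun θ => Real.sin θ * P.eval (Real.cos θ) := by
    funext θ
    rw [hPdef, eval_finset_sum, Finset.mul_sum]
    apply Finset.sum_congr rfl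
    intro j _
    have := Polynomial.Chebyshev.U_real_cos θ (j:ℤ)
    push_cast at this
    rw [eval_mul, eval_C]
    rw [← this]
    ring
  -- P is nonzero
  have hfilter : ((Finset.range k).filter (fun j => lam j ≠ 0)).Nonempty := by
    obtain ⟨j, hj, hlj⟩ := hlam
    exact ⟨j, Finset.mem_filter.mpr ⟨Finset.mem_range.mpr hj, hlj⟩⟩
  set d := ((Finset.range k).filter (fun j => lam j ≠ 0)).max' hfilter with hd
  have hdmem := ((Finset.range k).filter (fun j => lam j ≠ 0)).max'_mem hfilter
  rw [Finset.mem_filter, Finset.mem_range] at hdmem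
  have hdmax : ∀ j ∈ Finset.range k, d < j → lam j = 0 := by
    intro j hj hdj
    by_contra hne
    have hle := Finset.le_max' ((Finset.range k).filter (fun j => lam j ≠ 0)) j
      (Finset.mem_filter.mpr ⟨hj, hne⟩)
    rw [← hd] at hle
    omega
  have hPcoeff : P.coeff d = lam d * 2 ^ d := by
    rw [hPdef, Polynomial.finset_sum_coeff]
    rw [Finset.sum_eq_single d]
    · rw [coeff_C_mul, (Uaux d).2]
    · intro j hj hjd
      rcases lt_or_gt_of_ne hjd with h | h
      · rw [coeff_C_mul, Polynomial.coeff_eq_zero_of_natDegree_lt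
          (lt_of_le_of_lt (Uaux j).1 h), mul_zero]
      · rw [hdmax j hj h]; simp
    · intro h
      exact absurd (Finset.mem_range.mpr hdmem.1) h
  have hPne : P ≠ 0 := by
    intro h
    rw [h, Polynomial.coeff_zero] at hPcoeff
    exact hdmem.2 (by
      have h2 : (2:ℝ)^d ≠ 0 := by positivity
      rcases mul_eq_zero.mp hPcoeff.symm with h | h
      · exact h
      · exact absurd h h2)
  have hPdeg : P.natDegree ≤ k - 1 := by
    apply Polynomial.natDegree_sum_le_of_forall_le
    intro j hj
    calc (C (lam j) * U ℝ (j:ℤ)).natDegree ≤ (C (lam j)).natDegree + (U ℝ (j:ℤ)).natDegree :=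
        natDegree_mul_le
      _ ≤ 0 + j := add_le_add (by simp) (Uaux j).1
      _ ≤ k - 1 := by have := Finset.mem_range.mp hj; omega
  -- main argument
  intro S mm hSE _ hz
  rw [hfeq] at hz
  have hstep : ∀ x ∈ S, mm x ≤ P.rootMultiplicity (Real.cos x) := by
    intro x hx
    have hxE := hSE hx
    have hsx : Real.sin x ≠ 0 :=
      ne_of_gt (Real.sin_pos_of_pos_of_lt_pi hxE.1 hxE.2)
    exact mult_le x hsx P hPne (mm x) (hz x hx)
  calc ∑ x ∈ S, mm x ≤ ∑ x ∈ S, P.rootMultiplicity (Real.cos x) :=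
        Finset.sum_le_sum hstep
    _ = ∑ c ∈ S.image (fun x => Real.cos x), P.rootMultiplicity c := by
        rw [Finset.sum_image]
        intro a ha b hb hab
        have haE := hSE ha; have hbE := hSE hb
        exact Real.injOn_cos ⟨le_of_lt haE.1, le_of_lt haE.2⟩
          ⟨le_of_lt hbE.1, le_of_lt hbE.2⟩ hab
    _ ≤ P.natDegree := by
        set T := S.image (fun x => Real.cos x)
        have hcount : ∀ c, P.rootMultiplicity c = P.roots.count c :=
          fun c => (Polynomial.count_roots P).symm
        calc ∑ c ∈ T, P.rootMultiplicity c = ∑ c ∈ T, P.roots.count c := by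
              simp_rw [hcount]
          _ = ∑ c ∈ T ∩ P.roots.toFinset, P.roots.count c := by
              apply (Finset.sum_subset (Finset.inter_subset_left) _).symm
              intro c hcT hcn
              rw [Multiset.count_eq_zero]
              intro hmem
              exact hcn (Finset.mem_inter.mpr ⟨hcT, Multiset.mem_toFinset.mpr hmem⟩)
          _ ≤ ∑ c ∈ P.roots.toFinset, P.roots.count c :=
              Finset.sum_le_sum_of_subset Finset.inter_subset_right
          _ = Multiset.card P.roots := Multiset.toFinset_sum_count_eq _
          _ ≤ P.natDegree := Polynomial.card_roots' P
    _ ≤ k - 1 := hPdeg
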